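/- Let X := {1/n : n ∈ ℕ₊} and μ := ∑_{k=1}^∞ 2^{-k} δ_{1/k}. Then inf_{x ∈ X} μ(B_{2^{-n}}(x)) = 2^{1-2^n}, and there is no constant c > 0 such that 2^{1-2^n} ≥ c·2^{-n} for all n ∈ ℕ. -/

import Mathlib

open MeasureTheory ENNReal Classical

lemma mass (μ : Measure ℝ)
    (hμ : μ = Measure.sum fun k : ℕ =>
      ((2 : ℝ≥0∞)⁻¹ ^ (k + 1)) • Measure.dirac (((k : ℝ) + 1)⁻¹))
    (x r : ℝ) :
    μ (Metric.ball x r) = ∑' k : ℕ,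
      (if ((k : ℝ) + 1)⁻¹ ∈ Metric.ball x r then (2 : ℝ≥0∞)⁻¹ ^ (k + 1) else 0) := by
  have hm : MeasurableSet (Metric.ball x r) := Metric.isOpen_ball.measurableSet
  rw [hμ, Measure.sum_apply _ hm]
  congr 1; ext k
  rw [Measure.smul_apply, Measure.dirac_apply' _ hm]
  simp only [Set.indicator_apply, smul_eq_mul, Pi.one_apply]
  split <;> simp

lemma tail (M : ℕ) :
    ∑' k : ℕ, (if M ≤ k then (2 : ℝ≥0∞)⁻¹ ^ (k + 1) else 0) = (2 : ℝ≥0∞)⁻¹ ^ M := by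
  induction M with
  | zero =>
    simp only [Nat.zero_le, if_true, pow_zero, pow_succ]
    rw [ENNReal.tsum_mul_right, ENNReal.tsum_geometric, ENNReal.one_sub_inv_two,
      inv_inv]
    simp [ENNReal.mul_inv_cancel]
  | succ M ih =>
    have key : ∀ k : ℕ, (if M ≤ k then (2 : ℝ≥0∞)⁻¹ ^ (k + 1) else 0)
        = (if M + 1 ≤ k then (2 : ℝ≥0∞)⁻¹ ^ (k + 1) else 0)
          + (if k = M then (2 : ℝ≥0∞)⁻¹ ^ (M + 1) else 0) := by
      intro k
      rcases lt_trichotomy k M with h | h | h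
      · simp [Nat.not_le.mpr h, Nat.not_le.mpr (h.trans (Nat.lt_succ_self M)), h.ne]
      · subst h; simp
      · simp [lt_asymm h, h.ne', Nat.succ_le_of_lt h]
    rw [tsum_congr key, ENNReal.tsum_add, tsum_ite_eq] at ih
    have hfin : (2 : ℝ≥0∞)⁻¹ ^ (M + 1) ≠ ∞ := by
      simp [pow_ne_top]
    have h2 : (2 : ℝ≥0∞)⁻¹ ^ M = (2 : ℝ≥0∞)⁻¹ ^ (M + 1) + (2 : ℝ≥0∞)⁻¹ ^ (M + 1) := by
      rw [← two_mul, pow_succ, ← mul_assoc, mul_right_comm]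
      norm_num [ENNReal.mul_inv_cancel]
    rw [h2] at ih
    exact WithTop.add_right_cancel hfin ih

lemma pow_rw (n : ℕ) : (2 : ℝ≥0∞) ^ ((1 : ℤ) - 2 ^ n) = (2 : ℝ≥0∞)⁻¹ ^ (2 ^ n - 1) := by
  have h1 : (1 : ℕ) ≤ 2 ^ n := Nat.one_le_two_pow
  have : (1 : ℤ) - 2 ^ n = -((2 ^ n - 1 : ℕ) : ℤ) := by
    push_cast [h1]; ring
  rw [this, ENNReal.zpow_neg, zpow_natCast, ← ENNReal.inv_pow]

lemma mem_iff (n k : ℕ) :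
    ((k : ℝ) + 1)⁻¹ ∈ Metric.ball (((4 : ℝ) ^ n)⁻¹) ((2 : ℝ)⁻¹ ^ n) ↔ 2 ^ n ≤ k + 1 := by
  have hB0 : (0 : ℝ) < 2 ^ n := by positivity
  have hB1 : (1 : ℝ) ≤ 2 ^ n := one_le_pow₀ (by norm_num)
  have hA0 : (0 : ℝ) < (k : ℝ) + 1 := by positivity
  have h4 : ((4 : ℝ) ^ n) = (2 : ℝ) ^ n * (2 : ℝ) ^ n := by
    rw [← mul_pow]; norm_num
  have hr : ((2 : ℝ)⁻¹ ^ n) = ((2 : ℝ) ^ n)⁻¹ := by rw [inv_pow]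
  rw [Metric.mem_ball, Real.dist_eq, h4, hr, abs_lt]
  set A : ℝ := (k : ℝ) + 1 with hAdef
  set B : ℝ := 2 ^ n with hBdef
  constructor
  · rintro ⟨h1, h2⟩
    by_contra hlt
    push_neg at hlt
    have hAB : A + 1 ≤ B := by
      have : (k : ℝ) + 1 + 1 ≤ (2 : ℝ) ^ n := by
        have := Nat.succ_le_of_lt hlt
        calc ((k : ℝ) + 1) + 1 = ((k + 1 + 1 : ℕ) : ℝ) := by push_cast; ring
          _ ≤ ((2 ^ n : ℕ) : ℝ) := by exact_mod_cast Nat.cast_le.mpr this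
          _ = (2 : ℝ) ^ n := by push_cast; ring
      simpa using this
    have hB2 : (2 : ℝ) ≤ B := by linarith
    have hBm1 : (0 : ℝ) < B - 1 := by linarith
    have key1 : (B - 1)⁻¹ ≤ A⁻¹ := by
      apply inv_anti₀ hA0; linarith
    have e : (B - 1)⁻¹ - B⁻¹ = (B * (B - 1))⁻¹ := by
      field_simp; ring
    have key2 : (B * B)⁻¹ ≤ (B * (B - 1))⁻¹ := by
      apply inv_anti₀ (by nlinarith); nlinarith
    linarith
  · intro hle
    have hBA : B ≤ A := by
      calc B = ((2 ^ n : ℕ) : ℝ) := by push_cast; ring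
        _ ≤ ((k + 1 : ℕ) : ℝ) := by exact_mod_cast Nat.cast_le.mpr hle
        _ = A := by push_cast; ring
    have hinv : A⁻¹ ≤ B⁻¹ := inv_anti₀ hB0 hBA
    have hinv2 : (B * B)⁻¹ ≤ B⁻¹ := inv_anti₀ hB0 (by nlinarith)
    have hApos : (0 : ℝ) < A⁻¹ := by positivity
    have hBBpos : (0 : ℝ) < (B * B)⁻¹ := by positivity
    constructor <;> linarith

-- lower bound for any atom center
lemma lower (μ : Measure ℝ)
    (hμ : μ = Measure.sum fun k : ℕ =>
      ((2 : ℝ≥0∞)⁻¹ ^ (k + 1)) • Measure.dirac (((k : ℝ) + 1)⁻¹))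
    (n m : ℕ) :
    (2 : ℝ≥0∞)⁻¹ ^ (2 ^ n - 1) ≤ μ (Metric.ball (((m : ℝ) + 1)⁻¹) ((2 : ℝ)⁻¹ ^ n)) := by
  rw [mass μ hμ]
  have hr0 : (0 : ℝ) < (2 : ℝ)⁻¹ ^ n := by positivity
  rcases lt_or_ge (m + 1) (2 ^ n) with hlt | hle
  · -- own atom suffices
    have hmem : ((m : ℝ) + 1)⁻¹ ∈ Metric.ball (((m : ℝ) + 1)⁻¹) ((2 : ℝ)⁻¹ ^ n) :=
      Metric.mem_ball_self hr0
    calc (2 : ℝ≥0∞)⁻¹ ^ (2 ^ n - 1) ≤ (2 : ℝ≥0∞)⁻¹ ^ (m + 1) := by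
          apply pow_le_pow_of_le_one zero_le' (by norm_num)
          omega
      _ = (if ((m : ℝ) + 1)⁻¹ ∈ Metric.ball (((m : ℝ) + 1)⁻¹) ((2 : ℝ)⁻¹ ^ n)
            then (2 : ℝ≥0∞)⁻¹ ^ (m + 1) else 0) := by rw [if_pos hmem]
      _ ≤ _ := ENNReal.le_tsum m
  · -- tail suffices
    rw [← tail (2 ^ n - 1)]
    apply ENNReal.tsum_le_tsum
    intro k
    by_cases hk : 2 ^ n - 1 ≤ k
    · rw [if_pos hk, if_pos]
      -- membership
      have hk' : 2 ^ n ≤ k + 1 := by omega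
      have hA0 : (0 : ℝ) < (k : ℝ) + 1 := by positivity
      have hM0 : (0 : ℝ) < (m : ℝ) + 1 := by positivity
      have hB0 : (0 : ℝ) < (2 : ℝ) ^ n := by positivity
      have hcast : ∀ j : ℕ, 2 ^ n ≤ j + 1 → ((j : ℝ) + 1)⁻¹ ≤ ((2 : ℝ) ^ n)⁻¹ := by
        intro j hj
        apply inv_anti₀ hB0
        calc (2 : ℝ) ^ n = ((2 ^ n : ℕ) : ℝ) := by push_cast; ring
          _ ≤ ((j + 1 : ℕ) : ℝ) := by exact_mod_cast Nat.cast_le.mpr hj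
          _ = (j : ℝ) + 1 := by push_cast; ring
      have h1 := hcast k hk'
      have h2 := hcast m hle
      have hAi : (0 : ℝ) < ((k : ℝ) + 1)⁻¹ := by positivity
      have hMi : (0 : ℝ) < ((m : ℝ) + 1)⁻¹ := by positivity
      rw [Metric.mem_ball, Real.dist_eq, abs_lt, inv_pow]
      constructor <;> linarith
    · rw [if_neg hk]; exact zero_le'

theorem stmt_14
    (X : Set ℝ) (hX : X = {x : ℝ | ∃ k : ℕ, x = ((k : ℝ) + 1)⁻¹})
    (μ : Measure ℝ)
    (hμ : μ = Measure.sum fun k : ℕ =>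
      ((2 : ℝ≥0∞)⁻¹ ^ (k + 1)) • Measure.dirac (((k : ℝ) + 1)⁻¹)) :
    (∀ n : ℕ, ⨅ x ∈ X, μ (Metric.ball x ((2 : ℝ)⁻¹ ^ n)) =
        (2 : ℝ≥0∞) ^ ((1 : ℤ) - 2 ^ n)) ∧
      ¬∃ c : ℝ≥0∞, 0 < c ∧ ∀ n : ℕ,
        c * (2 : ℝ≥0∞)⁻¹ ^ n ≤ (2 : ℝ≥0∞) ^ ((1 : ℤ) - 2 ^ n) := by
  constructor
  · intro n
    rw [pow_rw n]
    apply le_antisymm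
    · -- upper bound via x₀ = (4^n)⁻¹
      set k₀ : ℕ := 4 ^ n - 1 with hk₀
      have hc : ((k₀ : ℝ) + 1)⁻¹ = ((4 : ℝ) ^ n)⁻¹ := by
        congr 1
        have h1 : (1 : ℕ) ≤ 4 ^ n := Nat.one_le_pow _ _ (by norm_num)
        rw [hk₀]
        push_cast [h1]
        ring
      have hx₀ : ((k₀ : ℝ) + 1)⁻¹ ∈ X := by rw [hX]; exact ⟨k₀, rfl⟩
      calc ⨅ x ∈ X, μ (Metric.ball x ((2 : ℝ)⁻¹ ^ n))
          ≤ μ (Metric.ball (((k₀ : ℝ) + 1)⁻¹) ((2 : ℝ)⁻¹ ^ n)) := biInf_le _ hx₀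
        _ = (2 : ℝ≥0∞)⁻¹ ^ (2 ^ n - 1) := by
            rw [hc, mass μ hμ, ← tail (2 ^ n - 1)]
            apply tsum_congr
            intro k
            have : ((k : ℝ) + 1)⁻¹ ∈ Metric.ball (((4 : ℝ) ^ n)⁻¹) ((2 : ℝ)⁻¹ ^ n)
                ↔ 2 ^ n - 1 ≤ k := by
              rw [mem_iff n k]; omega
            simp only [this]
    · apply le_iInf₂
      intro x hx
      rw [hX] at hx
      obtain ⟨m, rfl⟩ := hx
      exact lower μ hμ n m
  · rintro ⟨c, hc, h⟩
    -- c ≤ 2^(1+n-2^n) for all n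
    have key : ∀ n : ℕ, c ≤ (2 : ℝ≥0∞) ^ ((1 : ℤ) + n - 2 ^ n) := by
      intro n
      have h2n0 : ((2 : ℝ≥0∞) ^ n) ≠ 0 := by positivity
      have h2nt : ((2 : ℝ≥0∞) ^ n) ≠ ⊤ := by simp [pow_ne_top]
      have e1 : c = c * (2 : ℝ≥0∞)⁻¹ ^ n * (2 : ℝ≥0∞) ^ n := by
        rw [mul_assoc, ← ENNReal.inv_pow, ENNReal.inv_mul_cancel h2n0 h2nt, mul_one]
      calc c = c * (2 : ℝ≥0∞)⁻¹ ^ n * (2 : ℝ≥0∞) ^ n := e1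
        _ ≤ (2 : ℝ≥0∞) ^ ((1 : ℤ) - 2 ^ n) * (2 : ℝ≥0∞) ^ n :=
            by gcongr; exact h n
        _ = (2 : ℝ≥0∞) ^ ((1 : ℤ) + n - 2 ^ n) := by
            rw [← zpow_natCast (2 : ℝ≥0∞) n,
              ← ENNReal.zpow_add (by norm_num) (by norm_num)]
            ring_nf
    -- find j with 2⁻¹^j < c
    obtain ⟨j, hj⟩ := ENNReal.exists_inv_two_pow_lt hc.ne'
    have hn : (1 : ℤ) + (j + 2 : ℕ) - 2 ^ (j + 2 : ℕ) ≤ -(j : ℤ) := by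
      have h1 : (j : ℤ) + 1 ≤ 2 ^ j := by exact_mod_cast (Nat.lt_two_pow_self : j < 2 ^ j)
      have h2 : (2 : ℤ) ^ (j + 2) = 4 * 2 ^ j := by ring
      push_cast
      linarith
    have : c ≤ (2 : ℝ≥0∞)⁻¹ ^ j := by
      calc c ≤ (2 : ℝ≥0∞) ^ ((1 : ℤ) + (j + 2 : ℕ) - 2 ^ (j + 2 : ℕ)) := key (j + 2)
        _ ≤ (2 : ℝ≥0∞) ^ (-(j : ℤ)) := ENNReal.zpow_le_of_le (by norm_num) hn
        _ = (2 : ℝ≥0∞)⁻¹ ^ j := by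
            rw [ENNReal.zpow_neg, zpow_natCast,
              ← ENNReal.inv_pow]
    exact absurd (lt_of_le_of_lt this hj) (lt_irrefl _)
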